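/- Fix reals α, β with 0 ≤ α < 1 and β > 1. A sequence x ∈ {0,…,ℓ}^ℕ belongs to Σ if and only if a ⪯ σ^{k−1}(x) ⪯ b for all k ∈ ℕ. -/

import Mathlib

noncomputable section

namespace IntermediateBeta

/-- The intermediate beta transformation `x ↦ βx + α mod 1`. -/
def F (α β : ℝ) (x : ℝ) : ℝ := Int.fract (β * x + α)

/-- The digit sequence of a point: `Om α β x n` is the index `i` with `F^[n] x ∈ J_i`.
For `y ∈ [0,1)` we have `y ∈ J_i ↔ ⌊β y + α⌋ = i`. -/
def Om (α β : ℝ) (x : ℝ) : ℕ → ℕ := fun n => (⌊β * ((F α β)^[n] x) + α⌋).toNat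

/-- `ℓ = ⌈α + β⌉ - 1`. -/
def ell (α β : ℝ) : ℕ := ⌈α + β⌉₊ - 1

/-- The subshift `Σ`: closure (in the product topology) of the set of digit sequences
of points of `[0,1)`. -/
def Sig (α β : ℝ) : Set (ℕ → ℕ) := closure (Om α β '' Set.Ico (0 : ℝ) 1)

/-- The shift map. -/
def shift (x : ℕ → ℕ) : ℕ → ℕ := fun n => x (n + 1)

/-- Lexicographic order on one-sided sequences. -/
def lexLe (x y : ℕ → ℕ) : Prop := x = y ∨ ∃ k, (∀ i < k, x i = y i) ∧ x k < y k

/-- The language of a subset `S` of the full shift: the finite words occurring as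
initial segments of elements of `S`. -/
def langOf (S : Set (ℕ → ℕ)) (w : List ℕ) : Prop :=
  ∃ x ∈ S, ∀ i : Fin w.length, x i = w.get i

/-- Membership in the language `𝓛` of the subshift `Σ`. -/
def inLang (α β : ℝ) (w : List ℕ) : Prop := langOf (Sig α β) w

/-- The tail segment of `w` of length `k` agrees with the initial segment of `s`
of length `k`. -/
def tailAgrees (s : ℕ → ℕ) (w : List ℕ) (k : ℕ) : Prop :=
  k ≤ w.length ∧ ∀ i < k, w.getD (w.length - k + i) 0 = s i

/-- `kmax s w` is the length of the longest tail segment of `w` agreeing with an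
initial segment of `s` (`k₁(w)` when `s = a`, `k₂(w)` when `s = b`). -/
def kmax (s : ℕ → ℕ) (w : List ℕ) : ℕ := sSup {k | tailAgrees s w k}

/-- `D a b` is the set of lengths `n` such that the initial segment of `b` of
length `n` occurs somewhere in `a`.  Thus `D a b` is the set `𝖣(a)` of the paper
and `D b a` is `𝖣(b)`. -/
def D (a b : ℕ → ℕ) : Set ℕ := {n | ∃ j, ∀ i < n, b i = a (j + i)}

/-- Gluing of the words `w 0, v 0, w 1, v 1, …, v (n-1), w n`. -/
def glue {n : ℕ} (w : Fin (n + 1) → List ℕ) (v : Fin n → List ℕ) : List ℕ :=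
  (List.ofFn fun i : Fin n => w i.castSucc ++ v i).flatten ++ w (Fin.last n)

/-- A collection `G` of words inside the language `lang` has specification: there
is `τ ∈ ℕ` such that any finite list of words of `G` can be glued, with gluing
words from `lang` of length `τ`, into a word of `lang`. -/
def HasSpec (lang G : List ℕ → Prop) : Prop :=
  ∃ τ : ℕ, 1 ≤ τ ∧ ∀ n : ℕ, ∀ w : Fin (n + 1) → List ℕ, (∀ i, G (w i)) →
    ∃ v : Fin n → List ℕ, (∀ i, (v i).length = τ ∧ lang (v i)) ∧ lang (glue w v)

/-- The initial segment of a sequence, as a finite word. -/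
def pre (s : ℕ → ℕ) (n : ℕ) : List ℕ := List.ofFn fun i : Fin n => s i

/-- Lexicographic order for finite words (of equal length). -/
def wordLe (u v : List ℕ) : Prop :=
  u = v ∨ ∃ k, (∀ i < k, u.getD i 0 = v.getD i 0) ∧ u.getD k 0 < v.getD k 0

/-- Concatenation of a finite word with an infinite sequence. -/
def wcat (w : List ℕ) (x : ℕ → ℕ) : ℕ → ℕ := fun n =>
  if h : n < w.length then w.get ⟨n, h⟩ else x (n - w.length)

/-- strict lexicographic order -/
def lexLt (u v : ℕ → ℕ) : Prop := ∃ k, (∀ i < k, u i = v i) ∧ u k < v k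

lemma shift_iterate_apply (k : ℕ) (x : ℕ → ℕ) (n : ℕ) : shift^[k] x n = x (k + n) := by
  induction k generalizing x n with
  | zero => simp
  | succ k ih =>
    rw [Function.iterate_succ_apply, ih]
    simp [shift, Nat.add_assoc, Nat.add_comm 1 n, Nat.add_left_comm]


lemma lexLt.le {u v : ℕ → ℕ} (h : lexLt u v) : lexLe u v := Or.inr h

lemma lexLe_refl (u : ℕ → ℕ) : lexLe u u := Or.inl rfl

lemma lexLt_irrefl (u : ℕ → ℕ) : ¬ lexLt u u := by
  rintro ⟨k, -, hk⟩; exact lt_irrefl _ hk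

lemma lexLt_ne {u v : ℕ → ℕ} (h : lexLt u v) : u ≠ v := by
  rintro rfl; exact lexLt_irrefl u h

lemma lexLt_asymm {u v : ℕ → ℕ} (h : lexLt u v) (h' : lexLt v u) : False := by
  obtain ⟨k1, ha1, hl1⟩ := h
  obtain ⟨k2, ha2, hl2⟩ := h'
  rcases lt_trichotomy k1 k2 with h | rfl | h
  · exact absurd (ha2 _ h).symm (ne_of_lt hl1)
  · exact absurd hl2 (not_lt.2 hl1.le)
  · exact absurd (ha1 _ h).symm (ne_of_lt hl2)

lemma lexLe_antisymm {u v : ℕ → ℕ} (h : lexLe u v) (h' : lexLe v u) : u = v := by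
  rcases h with rfl | h; · rfl
  rcases h' with rfl | h'; · rfl
  exact absurd h' (fun hh => lexLt_asymm h hh)

lemma lexLt_of_le_ne {u v : ℕ → ℕ} (h : lexLe u v) (h' : u ≠ v) : lexLt u v := by
  rcases h with rfl | h; · exact absurd rfl h'
  · exact h

lemma lexLe_total (u v : ℕ → ℕ) : lexLe u v ∨ lexLe v u := by
  by_cases h : u = v
  · exact Or.inl (Or.inl h)
  · have hex : ∃ k, u k ≠ v k := Function.ne_iff.1 h
    set k := Nat.find hex with hk
    have hspec : u k ≠ v k := Nat.find_spec hex
    have hmin : ∀ i < k, u i = v i := fun i hi => by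
      have := Nat.find_min hex hi; simpa using this
    rcases lt_or_gt_of_ne hspec with hlt | hgt
    · exact Or.inl (Or.inr ⟨k, hmin, hlt⟩)
    · exact Or.inr (Or.inr ⟨k, fun i hi => (hmin i hi).symm, hgt⟩)

lemma not_lexLt_iff {u v : ℕ → ℕ} : ¬ lexLt u v ↔ lexLe v u := by
  constructor
  · intro h
    rcases lexLe_total u v with h' | h'
    · rcases h' with rfl | h'
      · exact lexLe_refl u
      · exact absurd h' h
    · exact h'
  · intro h hlt
    rcases h with rfl | h
    · exact lexLt_irrefl _ hlt
    · exact lexLt_asymm hlt h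

lemma lexLe_trans {u v w : ℕ → ℕ} (h : lexLe u v) (h' : lexLe v w) : lexLe u w := by
  rcases h with rfl | h; · exact h'
  rcases h' with rfl | h'; · exact Or.inr h
  obtain ⟨k1, ha1, hl1⟩ := h
  obtain ⟨k2, ha2, hl2⟩ := h'
  rcases lt_trichotomy k1 k2 with hc | rfl | hc
  · exact Or.inr ⟨k1, fun i hi => (ha1 i hi).trans (ha2 i (hi.trans hc)),
      (ha2 k1 hc) ▸ hl1⟩
  · exact Or.inr ⟨k1, fun i hi => (ha1 i hi).trans (ha2 i hi), hl1.trans hl2⟩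
  · exact Or.inr ⟨k2, fun i hi => (ha1 i (hi.trans hc)).trans (ha2 i hi),
      (ha1 k2 hc) ▸ hl2⟩

lemma lexLe_coord {u v : ℕ → ℕ} (h : lexLe u v) {n : ℕ}
    (ha : ∀ i < n, u i = v i) : u n ≤ v n := by
  rcases h with rfl | ⟨k, hk, hl⟩; · exact le_refl _
  rcases lt_trichotomy k n with hc | rfl | hc
  · exact absurd (ha k hc) (ne_of_lt hl)
  · exact hl.le
  · exact (hk n hc).le

lemma lexLe_shift {u v : ℕ → ℕ} (h : lexLe u v) {n : ℕ}
    (ha : ∀ i < n, u i = v i) : lexLe (shift^[n] u) (shift^[n] v) := by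
  rcases h with rfl | ⟨k, hk, hl⟩; · exact lexLe_refl _
  rcases lt_or_ge k n with hc | hc
  · exact absurd (ha k hc) (ne_of_lt hl)
  · refine Or.inr ⟨k - n, fun i hi => ?_, ?_⟩
    · rw [shift_iterate_apply, shift_iterate_apply]
      exact hk _ (by omega)
    · rw [shift_iterate_apply, shift_iterate_apply]
      have : n + (k - n) = k := by omega
      rw [this]; exact hl

lemma lexLe_cons {u v : ℕ → ℕ} (h0 : u 0 = v 0) (h : lexLe (shift u) (shift v)) :
    lexLe u v := by
  rcases h with he | ⟨k, hk, hl⟩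
  · left; funext n
    cases n with
    | zero => exact h0
    | succ n => exact congrFun he n
  · refine Or.inr ⟨k + 1, fun i hi => ?_, hl⟩
    cases i with
    | zero => exact h0
    | succ i => exact hk i (by omega)

lemma lexLt_cons {u v : ℕ → ℕ} (h0 : u 0 = v 0) (h : lexLt (shift u) (shift v)) :
    lexLt u v := by
  obtain ⟨k, hk, hl⟩ := h
  refine ⟨k + 1, fun i hi => ?_, hl⟩
  cases i with
  | zero => exact h0
  | succ i => exact hk i (by omega)



variable {α β : ℝ}

lemma F_mem (y : ℝ) : F α β y ∈ Set.Ico (0:ℝ) 1 :=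
  ⟨Int.fract_nonneg _, Int.fract_lt_one _⟩

lemma iter_mem {y : ℝ} (hy : y ∈ Set.Ico (0:ℝ) 1) (n : ℕ) :
    (F α β)^[n] y ∈ Set.Ico (0:ℝ) 1 := by
  cases n with
  | zero => exact hy
  | succ n => rw [Function.iterate_succ_apply']; exact F_mem _

lemma F_iter_succ (y : ℝ) (n : ℕ) :
    (F α β)^[n+1] y = β * (F α β)^[n] y + α - ⌊β * (F α β)^[n] y + α⌋ := by
  rw [Function.iterate_succ_apply']; rfl

lemma floor_nn (hα0 : 0 ≤ α) (hβ : 1 < β) {y : ℝ} (hy : y ∈ Set.Ico (0:ℝ) 1) (n : ℕ) :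
    (0:ℤ) ≤ ⌊β * (F α β)^[n] y + α⌋ := by
  apply Int.floor_nonneg.2
  have h := (iter_mem (α:=α) (β:=β) hy n).1
  nlinarith

/-- cast of the digit as a real number -/
lemma om_real (hα0 : 0 ≤ α) (hβ : 1 < β) {y : ℝ} (hy : y ∈ Set.Ico (0:ℝ) 1) (n : ℕ) :
    ((Om α β y n : ℕ) : ℝ) = (⌊β * (F α β)^[n] y + α⌋ : ℤ) := by
  rw [Om]
  norm_cast
  exact Int.toNat_of_nonneg (floor_nn hα0 hβ hy n)

lemma om_recur (hα0 : 0 ≤ α) (hβ : 1 < β) {y : ℝ} (hy : y ∈ Set.Ico (0:ℝ) 1) (n : ℕ) :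
    ((Om α β y n : ℕ) : ℝ) = β * (F α β)^[n] y + α - (F α β)^[n+1] y := by
  rw [om_real hα0 hβ hy n, F_iter_succ]; ring

lemma ell_lt (hα0 : 0 ≤ α) (hβ : 1 < β) : ((ell α β : ℕ) : ℝ) < α + β := by
  have h1 : (1:ℕ) ≤ ⌈α + β⌉₊ := by
    rw [Nat.one_le_ceil_iff]; linarith
  rw [ell, Nat.cast_sub h1]
  have := Nat.ceil_lt_add_one (by linarith : (0:ℝ) ≤ α + β)
  push_cast
  linarith

lemma om_le_ell (hα0 : 0 ≤ α) (hβ : 1 < β) {y : ℝ} (hy : y ∈ Set.Ico (0:ℝ) 1) (n : ℕ) :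
    Om α β y n ≤ ell α β := by
  have h2 : ((Om α β y n : ℕ) : ℝ) < α + β := by
    rw [om_real hα0 hβ hy n]
    have h3 := (iter_mem (α:=α) (β:=β) hy n).2
    have : (⌊β * (F α β)^[n] y + α⌋ : ℝ) ≤ β * (F α β)^[n] y + α := Int.floor_le _
    nlinarith
  by_contra h
  push_neg at h
  have : ((ell α β : ℕ) : ℝ) < (Om α β y n : ℝ) := by exact_mod_cast h
  have := ell_lt hα0 hβ
  -- Om ≤ ell since Om < α+β and ell = ⌈α+β⌉₊ - 1
  have hceil : ((Om α β y n : ℕ):ℝ) < (⌈α + β⌉₊ : ℝ) := lt_of_lt_of_le h2 (Nat.le_ceil _)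
  have hlt : Om α β y n < ⌈α + β⌉₊ := by exact_mod_cast hceil
  simp only [ell] at h ⊢
  omega

lemma shift_om_one (y : ℝ) : shift (Om α β y) = Om α β (F α β y) := by
  funext n
  simp [shift, Om, Function.iterate_succ_apply]

/-- shift of digit sequence -/
lemma shift_om (y : ℝ) (k : ℕ) : shift^[k] (Om α β y) = Om α β ((F α β)^[k] y) := by
  induction k generalizing y with
  | zero => simp
  | succ k ih =>
    rw [Function.iterate_succ_apply, shift_om_one, ih (F α β y),
      Function.iterate_succ_apply]


/-- the valuation map -/
def piV (α β : ℝ) (s : ℕ → ℕ) : ℝ := ∑' n, ((s n : ℝ) - α) / β ^ (n + 1)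

/-- boundedness of a sequence by ell -/
def Bdd (α β : ℝ) (s : ℕ → ℕ) : Prop := ∀ n, s n ≤ ell α β

lemma bdd_shift {s : ℕ → ℕ} (hs : Bdd α β s) (k : ℕ) : Bdd α β (shift^[k] s) := by
  intro n; rw [shift_iterate_apply]; exact hs _

lemma norm_term_le (hα0 : 0 ≤ α) (hα1 : α < 1) (hβ : 1 < β) {s : ℕ → ℕ}
    (hs : Bdd α β s) (n : ℕ) :
    ‖((s n : ℝ) - α) / β ^ (n + 1)‖ ≤ ((ell α β : ℝ) + 1) * (1/β) ^ (n+1) := by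
  have hb : (0:ℝ) < β := by linarith
  have hp : (0:ℝ) < β ^ (n+1) := by positivity
  rw [Real.norm_eq_abs, abs_div, abs_of_pos hp, div_le_iff₀ hp]
  have hc0 : (0:ℝ) ≤ (s n : ℝ) := Nat.cast_nonneg _
  have hc1 : (0:ℝ) ≤ (ell α β : ℝ) := Nat.cast_nonneg _
  have h1 : |(s n : ℝ) - α| ≤ (ell α β : ℝ) + 1 := by
    rw [abs_le]
    have : ((s n : ℕ) : ℝ) ≤ (ell α β : ℝ) := by exact_mod_cast hs n
    constructor <;> [linarith; linarith]
  calc |(s n : ℝ) - α| ≤ (ell α β : ℝ) + 1 := h1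
    _ ≤ ((ell α β : ℝ) + 1) * ((1/β)^(n+1) * β^(n+1)) := by
        rw [div_pow, one_pow, div_mul_cancel₀ _ (ne_of_gt hp), mul_one]
    _ = ((ell α β : ℝ) + 1) * (1/β)^(n+1) * β^(n+1) := by ring

lemma geom_aux (hβ : 1 < β) :
    Summable (fun n : ℕ => ((ell α β : ℝ) + 1) * (1/β) ^ (n+1)) := by
  apply Summable.mul_left
  exact ((summable_geometric_of_lt_one (by positivity)
    (by rw [div_lt_one (by linarith)]; linarith)).comp_injective
    (add_left_injective 1))

lemma summable_piV (hα0 : 0 ≤ α) (hα1 : α < 1) (hβ : 1 < β) {s : ℕ → ℕ} (hs : Bdd α β s) :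
    Summable (fun n => ((s n : ℝ) - α) / β ^ (n + 1)) :=
  Summable.of_norm_bounded (geom_aux hβ) (norm_term_le hα0 hα1 hβ hs)

lemma piV_bound (hα0 : 0 ≤ α) (hα1 : α < 1) (hβ : 1 < β) {s : ℕ → ℕ} (hs : Bdd α β s) :
    |piV α β s| ≤ ((ell α β : ℝ) + 1) * ((1/β) * (1 - 1/β)⁻¹) := by
  have hg := geom_aux (α := α) hβ
  have hnorm := norm_term_le hα0 hα1 hβ hs
  calc |piV α β s| ≤ ∑' n, ‖((s n : ℝ) - α) / β ^ (n + 1)‖ := by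
        rw [← Real.norm_eq_abs]
        exact norm_tsum_le_tsum_norm ((summable_piV hα0 hα1 hβ hs).abs)
    _ ≤ ∑' n : ℕ, ((ell α β : ℝ) + 1) * (1/β) ^ (n+1) :=
        Summable.tsum_le_tsum hnorm ((summable_piV hα0 hα1 hβ hs).abs) hg
    _ = ((ell α β : ℝ) + 1) * ((1/β) * (1 - 1/β)⁻¹) := by
        rw [tsum_mul_left]
        congr 1
        have : ∀ n : ℕ, (1/β : ℝ)^(n+1) = (1/β) * (1/β)^n := fun n => by ring
        rw [tsum_congr this, tsum_mul_left, tsum_geometric_of_lt_one (by positivity)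
          (by rw [div_lt_one (by linarith)]; linarith)]

lemma piV_step (hα0 : 0 ≤ α) (hα1 : α < 1) (hβ : 1 < β) {s : ℕ → ℕ} (hs : Bdd α β s) :
    piV α β s = (((s 0 : ℝ) - α) + piV α β (shift s)) / β := by
  have hsum := summable_piV hα0 hα1 hβ hs
  have hb : (0:ℝ) < β := by linarith
  rw [piV, Summable.tsum_eq_zero_add hsum]
  have h2 : ∀ n : ℕ, ((s (n+1) : ℝ) - α) / β ^ (n + 1 + 1)
      = (1/β) * (((shift s n : ℝ) - α) / β ^ (n+1)) := by
    intro n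
    have : (shift s n : ℝ) = (s (n+1) : ℝ) := rfl
    rw [this, pow_succ]
    ring
  rw [tsum_congr h2, tsum_mul_left]
  show ((s 0:ℝ) - α) / β ^ (0+1) + (1/β) * piV α β (shift s) = _
  rw [pow_one]
  field_simp

lemma piV_decomp (hα0 : 0 ≤ α) (hα1 : α < 1) (hβ : 1 < β) {s : ℕ → ℕ} (hs : Bdd α β s) (k : ℕ) :
    piV α β s = (∑ i ∈ Finset.range k, ((s i : ℝ) - α) / β ^ (i+1))
      + piV α β (shift^[k] s) / β ^ k := by
  induction k with
  | zero => simp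
  | succ k ih =>
    rw [ih, Finset.sum_range_succ]
    have hstep := piV_step hα0 hα1 hβ (bdd_shift hs k)
    have h0 : shift^[k] s 0 = s k := by rw [shift_iterate_apply, Nat.add_zero]
    rw [h0, ← Function.iterate_succ_apply' shift] at hstep
    rw [hstep]
    have hb : (β:ℝ) ≠ 0 := by linarith
    have hp : (β:ℝ) ^ k ≠ 0 := by positivity
    rw [pow_succ]
    field_simp
    ring

lemma om_partial (hα0 : 0 ≤ α) (hβ : 1 < β) {z : ℝ} (hz : z ∈ Set.Ico (0:ℝ) 1) (N : ℕ) :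
    ∑ i ∈ Finset.range N, ((Om α β z i : ℝ) - α) / β ^ (i+1)
      = z - (F α β)^[N] z / β ^ N := by
  induction N with
  | zero => simp
  | succ N ih =>
    rw [Finset.sum_range_succ, ih]
    have hrec := om_recur hα0 hβ hz N
    rw [hrec]
    have hb : (β:ℝ) ≠ 0 := by linarith
    have hp : (β:ℝ) ^ N ≠ 0 := by positivity
    rw [pow_succ]
    field_simp
    ring

lemma piV_om (hα0 : 0 ≤ α) (hα1 : α < 1) (hβ : 1 < β) {z : ℝ}
    (hz : z ∈ Set.Ico (0:ℝ) 1) : piV α β (Om α β z) = z := by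
  have hbdd : Bdd α β (Om α β z) := fun n => om_le_ell hα0 hβ hz n
  have hsum := summable_piV hα0 hα1 hβ hbdd
  have h1 := hsum.hasSum.tendsto_sum_nat
  have h3 : Filter.Tendsto (fun N : ℕ => (F α β)^[N] z / β ^ N) Filter.atTop (nhds 0) := by
    apply squeeze_zero (g := fun N : ℕ => (1/β) ^ N)
    · intro N
      have h4 := (iter_mem (α:=α) (β:=β) hz N).1
      positivity
    · intro N
      have h4 := (iter_mem (α:=α) (β:=β) hz N).2
      have hp : (0:ℝ) < β ^ N := by positivity
      rw [div_pow, one_pow, div_le_div_iff₀ hp hp, one_mul]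
      nlinarith
    · exact tendsto_pow_atTop_nhds_zero_of_lt_one (by positivity)
        (by rw [div_lt_one (by linarith)]; linarith)
  have h2 : Filter.Tendsto (fun N : ℕ => z - (F α β)^[N] z / β ^ N)
      Filter.atTop (nhds z) := by
    have := (tendsto_const_nhds (x := z) (f := Filter.atTop (α := ℕ))).sub h3
    simpa using this
  have h1' : Filter.Tendsto (fun N : ℕ => z - (F α β)^[N] z / β ^ N)
      Filter.atTop (nhds (∑' n, ((Om α β z n : ℝ) - α) / β ^ (n+1))) := by
    apply h1.congr
    intro N
    exact om_partial hα0 hβ hz N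
  exact (tendsto_nhds_unique h1' h2)

/-- monotonicity of the digit map -/
lemma om_mono (hα0 : 0 ≤ α) (hβ : 1 < β) {z w : ℝ} (hz : z ∈ Set.Ico (0:ℝ) 1)
    (hw : w ∈ Set.Ico (0:ℝ) 1) (hzw : z ≤ w) : lexLe (Om α β z) (Om α β w) := by
  by_cases heq : Om α β z = Om α β w
  · exact Or.inl heq
  have hex : ∃ k, Om α β z k ≠ Om α β w k := Function.ne_iff.1 heq
  set k := Nat.find hex with hk
  have hspec : Om α β z k ≠ Om α β w k := Nat.find_spec hex
  have hmin : ∀ i < k, Om α β z i = Om α β w i := fun i hi => by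
    have := Nat.find_min hex hi; simpa using this
  have key : ∀ n ≤ k, (F α β)^[n] z ≤ (F α β)^[n] w := by
    intro n hn
    induction n with
    | zero => exact hzw
    | succ n ih =>
      have hih := ih (by omega)
      have hfl : ⌊β * (F α β)^[n] z + α⌋ = ⌊β * (F α β)^[n] w + α⌋ := by
        have h1 := om_real hα0 hβ hz n
        have h2 := om_real hα0 hβ hw n
        have h3 : Om α β z n = Om α β w n := hmin n (by omega)
        have : ((⌊β * (F α β)^[n] z + α⌋:ℤ):ℝ) = ((⌊β * (F α β)^[n] w + α⌋:ℤ):ℝ) := by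
          rw [← h1, ← h2, h3]
        exact_mod_cast this
      rw [F_iter_succ, F_iter_succ, hfl]
      have : β * (F α β)^[n] z ≤ β * (F α β)^[n] w := by nlinarith
      linarith
  refine Or.inr ⟨k, hmin, ?_⟩
  have hkk := key k le_rfl
  have hfl : ⌊β * (F α β)^[k] z + α⌋ ≤ ⌊β * (F α β)^[k] w + α⌋ := by
    apply Int.floor_le_floor
    nlinarith
  have h1 : Om α β z k ≤ Om α β w k := by
    simp only [Om]
    omega
  omega

/-- if digit sequences are lex-ordered, the points are ordered -/
lemma om_le_of_lexLe (hα0 : 0 ≤ α) (hα1 : α < 1) (hβ : 1 < β) {z w : ℝ}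
    (hz : z ∈ Set.Ico (0:ℝ) 1) (hw : w ∈ Set.Ico (0:ℝ) 1)
    (h : lexLe (Om α β z) (Om α β w)) : z ≤ w := by
  by_contra hc
  push_neg at hc
  have h2 := om_mono hα0 hβ hw hz hc.le
  have h3 := lexLe_antisymm h h2
  have : z = w := by
    rw [← piV_om hα0 hα1 hβ hz, ← piV_om hα0 hα1 hβ hw, h3]
  exact absurd this (ne_of_lt hc).symm

/-- membership in a closure in the product topology via finite prefixes -/
lemma mem_closure_iff_prefix (S : Set (ℕ → ℕ)) (x : ℕ → ℕ) :
    x ∈ closure S ↔ ∀ m, ∃ s ∈ S, ∀ i < m, s i = x i := by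
  constructor
  · intro h m
    have hU : IsOpen {y : ℕ → ℕ | ∀ i < m, y i = x i} := by
      have : {y : ℕ → ℕ | ∀ i < m, y i = x i}
          = ⋂ i : Fin m, {y : ℕ → ℕ | y i = x i} := by
        ext y
        simp only [Set.mem_setOf_eq, Set.mem_iInter]
        exact ⟨fun h i => h i i.2, fun h i hi => h ⟨i, hi⟩⟩
      rw [this]
      apply isOpen_iInter_of_finite
      intro i
      have : {y : ℕ → ℕ | y (i:ℕ) = x (i:ℕ)} = (fun y : ℕ → ℕ => y (i:ℕ)) ⁻¹' {x (i:ℕ)} := rfl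
      rw [this]
      exact (isOpen_discrete ({x (i:ℕ)} : Set ℕ)).preimage (continuous_apply (i:ℕ))
    have := mem_closure_iff.1 h _ hU (fun i _ => rfl)
    obtain ⟨s, hs1, hs2⟩ := this
    exact ⟨s, hs2, hs1⟩
  · intro h
    choose z hz1 hz2 using h
    refine mem_closure_of_tendsto (f := z) (b := Filter.atTop) ?_ ?_
    · rw [tendsto_pi_nhds]
      intro i
      apply Filter.Tendsto.congr' (f₁ := fun _ => x i)
      · filter_upwards [Filter.eventually_ge_atTop (i+1)] with m hm
        exact (hz2 m i (by omega)).symm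
      · exact tendsto_const_nhds
    · filter_upwards with m using hz1 m

lemma bdd_of_mem_Sig (hα0 : 0 ≤ α) (hβ : 1 < β) {v : ℕ → ℕ} (hv : v ∈ Sig α β) :
    Bdd α β v := by
  intro n
  by_contra hc
  push_neg at hc
  obtain ⟨s, hs, hpre⟩ := (mem_closure_iff_prefix _ _).1 hv (n+1)
  obtain ⟨z, hz, rfl⟩ := hs
  have := om_le_ell hα0 hβ hz n
  rw [hpre n (by omega)] at this
  omega

lemma shift_mem_Sig {v : ℕ → ℕ} (hv : v ∈ Sig α β) (k : ℕ) :
    shift^[k] v ∈ Sig α β := by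
  induction k with
  | zero => exact hv
  | succ k ih =>
    rw [Function.iterate_succ_apply']
    have hcont : Continuous (shift : (ℕ → ℕ) → (ℕ → ℕ)) := by
      apply continuous_pi
      intro n
      exact continuous_apply (n+1)
    have h1 : shift '' (Om α β '' Set.Ico (0:ℝ) 1) ⊆ Om α β '' Set.Ico (0:ℝ) 1 := by
      rintro - ⟨-, ⟨z, hz, rfl⟩, rfl⟩
      exact ⟨F α β z, F_mem z, (shift_om_one z).symm⟩
    have h2 := (image_closure_subset_closure_image hcont (s := Om α β '' Set.Ico (0:ℝ) 1))
    have h3 : shift (shift^[k] v) ∈ closure (shift '' (Om α β '' Set.Ico (0:ℝ) 1)) :=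
      h2 ⟨_, ih, rfl⟩
    exact closure_mono h1 h3

/-- `a = Om 0` is the lexicographic minimum of `Σ`. -/
lemma a_min (hα0 : 0 ≤ α) (hα1 : α < 1) (hβ : 1 < β) {v : ℕ → ℕ} (hv : v ∈ Sig α β) :
    lexLe (Om α β 0) v := by
  have h0 : (0:ℝ) ∈ Set.Ico (0:ℝ) 1 := ⟨le_refl _, by norm_num⟩
  by_contra hc
  have hlt : lexLt v (Om α β 0) := by
    rcases lexLe_total (Om α β 0) v with h | h
    · exact absurd h hc
    · exact lexLt_of_le_ne h (fun he => hc (he ▸ lexLe_refl _))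
  obtain ⟨k, hk, hkl⟩ := hlt
  obtain ⟨s, hs, hpre⟩ := (mem_closure_iff_prefix _ _).1 hv (k+1)
  obtain ⟨z, hz, rfl⟩ := hs
  have hmono := om_mono hα0 hβ h0 hz hz.1
  have hcoord := lexLe_coord hmono (n := k) (fun i hi => by
    rw [hpre i (by omega)]; exact (hk i hi).symm)
  rw [hpre k (by omega)] at hcoord
  omega

/-- value of elements of `Σ` lies in `[0,1]` -/
lemma piV_mem_Sig (hα0 : 0 ≤ α) (hα1 : α < 1) (hβ : 1 < β) {v : ℕ → ℕ}
    (hv : v ∈ Sig α β) : 0 ≤ piV α β v ∧ piV α β v ≤ 1 := by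
  set K : ℝ := ((ell α β : ℝ) + 1) * ((1/β) * (1 - 1/β)⁻¹) with hK
  have hbdd : Bdd α β v := bdd_of_mem_Sig hα0 hβ hv
  have hK0 : 0 ≤ K := le_trans (abs_nonneg _) (piV_bound hα0 hα1 hβ (bdd_shift hbdd 0))
  have main : ∀ N : ℕ, -( (2*K) * (1/β)^N ) ≤ piV α β v ∧
      piV α β v ≤ 1 + (2*K) * (1/β)^N := by
    intro N
    obtain ⟨s, hs, hpre⟩ := (mem_closure_iff_prefix _ _).1 hv N
    obtain ⟨z, hz, rfl⟩ := hs
    have h1 := piV_decomp hα0 hα1 hβ hbdd N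
    have h2 := piV_decomp hα0 hα1 hβ (fun n => om_le_ell hα0 hβ hz n) N
    rw [piV_om hα0 hα1 hβ hz] at h2
    have hsum_eq : ∑ i ∈ Finset.range N, ((v i : ℝ) - α) / β ^ (i+1)
        = ∑ i ∈ Finset.range N, ((Om α β z i : ℝ) - α) / β ^ (i+1) := by
      apply Finset.sum_congr rfl
      intro i hi
      rw [hpre i (Finset.mem_range.1 hi)]
    have hb1 := abs_le.1 (piV_bound hα0 hα1 hβ (bdd_shift hbdd N))
    have hb2 := abs_le.1 (piV_bound hα0 hα1 hβ (bdd_shift (fun n => om_le_ell hα0 hβ hz n) N))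
    have hp : (0:ℝ) < β ^ N := by positivity
    have hinv : (0:ℝ) ≤ (β^N)⁻¹ := by positivity
    have e1 : piV α β v = z - piV α β (shift^[N] (Om α β z)) * (β ^ N)⁻¹
        + piV α β (shift^[N] v) * (β ^ N)⁻¹ := by
      rw [h1, hsum_eq, div_eq_mul_inv]
      rw [div_eq_mul_inv] at h2
      linarith
    have dP1 := mul_le_mul_of_nonneg_right hb1.1 hinv
    have dP2 := mul_le_mul_of_nonneg_right hb1.2 hinv
    have dQ1 := mul_le_mul_of_nonneg_right hb2.1 hinv
    have dQ2 := mul_le_mul_of_nonneg_right hb2.2 hinv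
    have hpow : (1/β:ℝ)^N = (β^N)⁻¹ := by rw [div_pow, one_pow, one_div]
    rw [hpow]
    constructor
    · rw [e1]; nlinarith [hz.1, hz.2]
    · rw [e1]; nlinarith [hz.1, hz.2]
  have hten : Filter.Tendsto (fun N : ℕ => (2*K) * (1/β)^N) Filter.atTop (nhds 0) := by
    have := (tendsto_pow_atTop_nhds_zero_of_lt_one
      (by positivity : (0:ℝ) ≤ 1/β)
      (by rw [div_lt_one (by linarith)]; linarith)).const_mul (2*K)
    simpa using this
  constructor
  · have hneg : Filter.Tendsto (fun N : ℕ => -((2*K) * (1/β)^N)) Filter.atTop (nhds 0) := by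
      simpa using hten.neg
    exact le_of_tendsto' hneg (fun N => (main N).1)
  · have hone : Filter.Tendsto (fun N : ℕ => 1 + (2*K) * (1/β)^N) Filter.atTop (nhds 1) := by
      simpa using (tendsto_const_nhds (x := (1:ℝ)) (f := Filter.atTop (α := ℕ))).add hten
    exact ge_of_tendsto' hone (fun N => (main N).2)

/-- strict comparison: if the digit sequence of `z` is lex-below `v ∈ Σ`, then `z < π(v)` -/
lemma lt_piV_of_lexLt (hα0 : 0 ≤ α) (hα1 : α < 1) (hβ : 1 < β) {z : ℝ} {v : ℕ → ℕ}
    (hz : z ∈ Set.Ico (0:ℝ) 1) (hv : v ∈ Sig α β) (h : lexLt (Om α β z) v) :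
    z < piV α β v := by
  obtain ⟨k, hk, hkl⟩ := h
  have hbdd : Bdd α β v := bdd_of_mem_Sig hα0 hβ hv
  have hOmbdd : Bdd α β (Om α β z) := fun n => om_le_ell hα0 hβ hz n
  have h1 := piV_decomp hα0 hα1 hβ hbdd (k+1)
  have h2 := piV_decomp hα0 hα1 hβ hOmbdd (k+1)
  rw [piV_om hα0 hα1 hβ hz] at h2
  have hp : (0:ℝ) < β ^ (k+1) := by positivity
  have hSig2 : shift^[k+1] v ∈ Sig α β := shift_mem_Sig hv (k+1)
  have hpos := (piV_mem_Sig hα0 hα1 hβ hSig2).1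
  have hOmtail : piV α β (shift^[k+1] (Om α β z)) = (F α β)^[k+1] z := by
    rw [shift_om, piV_om hα0 hα1 hβ (iter_mem hz (k+1))]
  rw [hOmtail] at h2
  have hsum : ∑ i ∈ Finset.range (k+1), ((v i : ℝ) - α) / β ^ (i+1)
      - ∑ i ∈ Finset.range (k+1), ((Om α β z i : ℝ) - α) / β ^ (i+1)
      = ((v k : ℝ) - (Om α β z k : ℝ)) / β ^ (k+1) := by
    rw [← Finset.sum_sub_distrib]
    rw [Finset.sum_eq_single_of_mem k (Finset.self_mem_range_succ k)]
    · ring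
    · intro i hi hne
      have : i < k := by
        have := Finset.mem_range.1 hi; omega
      rw [hk i this]; ring
  have hdig : (1:ℝ) ≤ (v k : ℝ) - (Om α β z k : ℝ) := by
    have h' : Om α β z k + 1 ≤ v k := hkl
    have h'' := (Nat.cast_le (α := ℝ)).2 h'
    push_cast at h''
    linarith
  have hF := (iter_mem (α:=α) (β:=β) hz (k+1)).2
  have e : piV α β v - z = (((v k : ℝ) - (Om α β z k : ℝ))
      + (piV α β (shift^[k+1] v) - (F α β)^[k+1] z)) / β ^ (k+1) := by
    linear_combination h1 - h2 + hsum
  have hnum : (0:ℝ) < ((v k : ℝ) - (Om α β z k : ℝ))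
      + (piV α β (shift^[k+1] v) - (F α β)^[k+1] z) := by linarith
  have := div_pos hnum hp
  linarith [e ▸ this]

/-- the supremum `b` of `Σ` is not itself a digit sequence of a point of `[0,1)` -/
lemma b_not_om (hα0 : 0 ≤ α) (hα1 : α < 1) (hβ : 1 < β) {b : ℕ → ℕ}
    (hbsup : ∀ y ∈ Sig α β, lexLe y b) :
    ∀ z ∈ Set.Ico (0:ℝ) 1, Om α β z ≠ b := by
  rintro z hz he
  set w : ℝ := (z + 1) / 2 with hw
  have hwmem : w ∈ Set.Ico (0:ℝ) 1 := by
    constructor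
    · rw [hw]; linarith [hz.1]
    · rw [hw]; linarith [hz.2]
  have hzw : z < w := by rw [hw]; linarith [hz.2]
  have h1 := om_mono hα0 hβ hz hwmem hzw.le
  have h2 : Om α β w ∈ Sig α β := subset_closure ⟨w, hwmem, rfl⟩
  have h3 := hbsup _ h2
  rw [← he] at h3
  have h4 := lexLe_antisymm h1 h3
  have : z = w := by
    rw [← piV_om hα0 hα1 hβ hz, ← piV_om hα0 hα1 hβ hwmem, h4]
  exact absurd this (ne_of_lt hzw)

lemma om_lt_b (hα0 : 0 ≤ α) (hα1 : α < 1) (hβ : 1 < β) {b : ℕ → ℕ}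
    (hbsup : ∀ y ∈ Sig α β, lexLe y b) {z : ℝ} (hz : z ∈ Set.Ico (0:ℝ) 1) :
    lexLt (Om α β z) b :=
  lexLt_of_le_ne (hbsup _ (subset_closure ⟨z, hz, rfl⟩)) (b_not_om hα0 hα1 hβ hbsup z hz)

/-- prepending a digit to a point -/
lemma om_step (hα0 : 0 ≤ α) (hβ : 1 < β) (c : ℕ) {w : ℝ} (hw : w ∈ Set.Ico (0:ℝ) 1)
    (h1 : 0 ≤ ((c:ℝ) - α + w) / β) (h2 : ((c:ℝ) - α + w) / β < 1) :
    ((c:ℝ) - α + w) / β ∈ Set.Ico (0:ℝ) 1 ∧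
    Om α β (((c:ℝ) - α + w) / β) 0 = c ∧
    F α β (((c:ℝ) - α + w) / β) = w ∧
    shift (Om α β (((c:ℝ) - α + w) / β)) = Om α β w := by
  have hb : (β:ℝ) ≠ 0 := by linarith
  have key : β * (((c:ℝ) - α + w) / β) + α = (c:ℝ) + w := by
    field_simp
    ring
  have hfl : ⌊β * (((c:ℝ) - α + w) / β) + α⌋ = (c:ℤ) := by
    rw [key]
    have hcast : ((c:ℕ):ℝ) = ((c:ℤ):ℝ) := by push_cast; rfl
    rw [hcast, Int.floor_intCast_add]
    rw [Int.floor_eq_zero_iff.2 (by exact ⟨hw.1, hw.2⟩), add_zero]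
  have hF : F α β (((c:ℝ) - α + w) / β) = w := by
    show Int.fract (β * (((c:ℝ) - α + w) / β) + α) = w
    rw [Int.fract, hfl, key]
    push_cast; ring
  refine ⟨⟨h1, h2⟩, ?_, hF, ?_⟩
  · show (⌊β * ((F α β)^[0] (((c:ℝ) - α + w) / β)) + α⌋).toNat = c
    rw [Function.iterate_zero_apply, hfl]
    simp
  · rw [shift_om_one, hF]

/-- the state automaton tracking agreement of a suffix of `x` with a prefix of `c` -/
def run (c x : ℕ → ℕ) : ℕ → ℕ
  | 0 => 0
  | (t+1) => if x t = c (run c x t) then run c x t + 1 else 0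

lemma run_le (c x : ℕ → ℕ) (t : ℕ) : run c x t ≤ t := by
  induction t with
  | zero => simp [run]
  | succ t ih =>
    rw [run]
    split <;> omega

lemma run_window (c x : ℕ → ℕ) (t : ℕ) : ∀ i < run c x t, x (t - run c x t + i) = c i := by
  induction t with
  | zero => simp [run]
  | succ t ih =>
    intro i hi
    rw [run] at hi ⊢
    by_cases h : x t = c (run c x t)
    · rw [if_pos h] at hi ⊢
      have hle := run_le c x t
      rcases Nat.lt_succ_iff_lt_or_eq.1 hi with h2 | h2
      · have := ih i h2
        have harith : t + 1 - (run c x t + 1) + i = t - run c x t + i := by omega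
        rw [harith]
        exact this
      · subst h2
        have harith : t + 1 - (run c x t + 1) + run c x t = t := by omega
        rw [harith]
        exact h
    · rw [if_neg h] at hi
      omega

lemma om_shift_index (z : ℝ) (t j : ℕ) :
    Om α β z (t + j) = Om α β ((F α β)^[t] z) j := by
  have := congrFun (shift_om (α:=α) (β:=β) z t) j
  rw [shift_iterate_apply] at this
  exact this

section Auto

variable (hα0 : 0 ≤ α) (hα1 : α < 1) (hβ : 1 < β)
variable {b : ℕ → ℕ} (hb : b ∈ Sig α β) (hbsup : ∀ y ∈ Sig α β, lexLe y b)
variable {x : ℕ → ℕ} (hL : ∀ k, lexLe (Om α β 0) (shift^[k] x))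
variable (hU : ∀ k, lexLe (shift^[k] x) b)

lemma zero_mem : (0:ℝ) ∈ Set.Ico (0:ℝ) 1 := ⟨le_refl _, by norm_num⟩

include hL in
lemma runA_dig (t : ℕ) : Om α β 0 (run (Om α β 0) x t) ≤ x t := by
  set a := Om α β 0
  set e := run a x t with he
  have hle := run_le a x t
  have hwin := run_window a x t
  have hcoord := lexLe_coord (hL (t - e)) (n := e) (fun i hi => by
    rw [shift_iterate_apply]
    exact (hwin i hi).symm)
  rw [shift_iterate_apply] at hcoord
  have : t - e + e = t := by omega
  rw [this] at hcoord
  exact hcoord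

include hL in
lemma runA_shift (t : ℕ) :
    lexLe (shift^[run (Om α β 0) x t] (Om α β 0)) (shift^[t] x) := by
  set a := Om α β 0
  set e := run a x t with he
  have hle := run_le a x t
  have hwin := run_window a x t
  have h1 := lexLe_shift (hL (t - e)) (n := e) (fun i hi => by
    rw [shift_iterate_apply]
    exact (hwin i hi).symm)
  rw [← Function.iterate_add_apply] at h1
  have : e + (t - e) = t := by omega
  rw [this] at h1
  exact h1

include hU in
lemma runB_dig (t : ℕ) : x t ≤ b (run b x t) := by
  set f := run b x t with hf
  have hle := run_le b x t
  have hwin := run_window b x t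
  have hcoord := lexLe_coord (hU (t - f)) (n := f) (fun i hi => by
    rw [shift_iterate_apply]
    exact hwin i hi)
  rw [shift_iterate_apply] at hcoord
  have : t - f + f = t := by omega
  rw [this] at hcoord
  exact hcoord

include hU in
lemma runB_shift (t : ℕ) :
    lexLe (shift^[t] x) (shift^[run b x t] b) := by
  set f := run b x t with hf
  have hle := run_le b x t
  have hwin := run_window b x t
  have h1 := lexLe_shift (hU (t - f)) (n := f) (fun i hi => by
    rw [shift_iterate_apply]
    exact hwin i hi)
  rw [← Function.iterate_add_apply] at h1
  have : f + (t - f) = t := by omega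
  rw [this] at h1
  exact h1

include hα0 hα1 hβ hb hbsup hL hU in
/-- Main inductive claim: any point whose digit sequence lies strictly inside the
follower interval of the prefix `x↾t` can be reached as `F^[t]` of a point realizing
that prefix. -/
lemma claimC : ∀ t : ℕ, ∀ w : ℝ, w ∈ Set.Ico (0:ℝ) 1 →
    lexLe (shift^[run (Om α β 0) x t] (Om α β 0)) (Om α β w) →
    lexLt (Om α β w) (shift^[run b x t] b) →
    ∃ z ∈ Set.Ico (0:ℝ) 1, (∀ i < t, Om α β z i = x i) ∧ (F α β)^[t] z = w := by
  intro t
  induction t with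
  | zero =>
    intro w hw _ _
    exact ⟨w, hw, by omega, rfl⟩
  | succ t ih =>
    intro w hw hlo hhi
    set a := Om α β 0 with ha
    set e := run a x t with he
    set f := run b x t with hf
    set c := x t with hc
    have hce : a e ≤ c := runA_dig hL t
    have hcf : c ≤ b f := runB_dig hU t
    have h0F : (F α β)^[e] 0 ∈ Set.Ico (0:ℝ) 1 := iter_mem zero_mem e
    have hae : shift^[e] a = Om α β ((F α β)^[e] 0) := shift_om 0 e
    have hrun_a : run a x (t+1) = if x t = a e then e + 1 else 0 := rfl
    have hrun_b : run b x (t+1) = if x t = b f then f + 1 else 0 := rfl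
    -- the new point
    set w' := (((c:ℕ):ℝ) - α + w) / β with hw'
    have hβ0 : (0:ℝ) < β := by linarith
    -- lower bound for w'
    have h1 : 0 ≤ w' := by
      rcases Nat.eq_zero_or_pos c with hc0 | hc1
      · -- c = 0, so a e = 0 and the run grows
        have hae0 : a e = 0 := by omega
        have hxa : x t = a e := by omega
        rw [hrun_a, if_pos hxa] at hlo
        have hsh : shift^[e+1] a = Om α β ((F α β)^[e+1] 0) := shift_om 0 (e+1)
        rw [hsh] at hlo
        have hwge : (F α β)^[e+1] 0 ≤ w :=
          om_le_of_lexLe hα0 hα1 hβ (iter_mem zero_mem (e+1)) hw hlo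
        have hfl0 : ⌊β * (F α β)^[e] 0 + α⌋ = 0 := by
          have h2 := om_real hα0 hβ zero_mem e
          have h3 : ((a e : ℕ) : ℝ) = 0 := by rw [hae0]; norm_num
          have : ((⌊β * (F α β)^[e] 0 + α⌋ : ℤ) : ℝ) = 0 := by rw [← h2]; exact h3
          exact_mod_cast this
        have hFe1 : (F α β)^[e+1] 0 = β * (F α β)^[e] 0 + α := by
          rw [F_iter_succ, hfl0]
          norm_num
        have : α ≤ w := by
          rw [hFe1] at hwge
          nlinarith [h0F.1]
        rw [hw', hc0]
        have : (0:ℝ) ≤ ((0:ℕ):ℝ) - α + w := by push_cast; linarith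
        positivity
      · rw [hw']
        have : (1:ℝ) ≤ ((c:ℕ):ℝ) := by exact_mod_cast hc1
        have h2 : (0:ℝ) ≤ ((c:ℕ):ℝ) - α + w := by linarith [hw.1]
        positivity
    -- upper bound for w'
    have h2 : w' < 1 := by
      rcases lt_or_eq_of_le hcf with hlt | heq
      · have hbf : b f ≤ ell α β := bdd_of_mem_Sig hα0 hβ hb f
        have hcast : ((c:ℕ):ℝ) + 1 ≤ ((ell α β : ℕ):ℝ) := by
          exact_mod_cast by omega
        have := ell_lt hα0 hβ
        rw [hw', div_lt_one hβ0]
        linarith [hw.2]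
      · have hxb : x t = b f := heq
        rw [hrun_b, if_pos hxb] at hhi
        have hsb1 : shift^[f+1] b ∈ Sig α β := shift_mem_Sig hb (f+1)
        have hwlt : w < piV α β (shift^[f+1] b) :=
          lt_piV_of_lexLt hα0 hα1 hβ hw hsb1 hhi
        have hstep := piV_step hα0 hα1 hβ (bdd_shift (bdd_of_mem_Sig hα0 hβ hb) f)
        have h00 : shift^[f] b 0 = b f := by rw [shift_iterate_apply, Nat.add_zero]
        rw [h00, ← Function.iterate_succ_apply' shift] at hstep
        have hle1 := (piV_mem_Sig hα0 hα1 hβ (shift_mem_Sig hb f)).2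
        rw [hstep, div_le_one hβ0] at hle1
        rw [hw', div_lt_one hβ0]
        rw [← heq] at hle1
        linarith
    obtain ⟨hw'mem, hd0, hFw', hshw'⟩ := om_step hα0 hβ c hw h1 h2
    -- condition 1 at time t
    have cond1 : lexLe (shift^[e] a) (Om α β w') := by
      have hhead : shift^[e] a 0 = a e := by rw [shift_iterate_apply, Nat.add_zero]
      rcases lt_or_eq_of_le hce with hlt | heq
      · exact Or.inr ⟨0, by omega, by rw [hhead, hd0]; exact hlt⟩
      · have hxa : x t = a e := heq.symm
        rw [hrun_a, if_pos hxa] at hlo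
        apply lexLe_cons
        · rw [hhead, hd0, heq]
        · rw [hshw', ← Function.iterate_succ_apply' shift]
          exact hlo
    -- condition 2 at time t
    have cond2 : lexLt (Om α β w') (shift^[f] b) := by
      have hhead : shift^[f] b 0 = b f := by rw [shift_iterate_apply, Nat.add_zero]
      rcases lt_or_eq_of_le hcf with hlt | heq
      · exact ⟨0, by omega, by rw [hhead, hd0]; exact hlt⟩
      · have hxb : x t = b f := heq
        rw [hrun_b, if_pos hxb] at hhi
        apply lexLt_cons
        · rw [hhead, hd0, heq]
        · rw [hshw', ← Function.iterate_succ_apply' shift]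
          exact hhi
    obtain ⟨z, hz, hpre, hFz⟩ := ih w' hw'mem cond1 cond2
    refine ⟨z, hz, ?_, ?_⟩
    · intro i hi
      rcases Nat.lt_succ_iff_lt_or_eq.1 hi with h | h
      · exact hpre i h
      · subst h
        have : Om α β z i = Om α β ((F α β)^[i] z) 0 := by
          have := om_shift_index (α:=α) (β:=β) z i 0
          rw [Nat.add_zero] at this
          exact this
        rw [this, hFz, hd0]
    · rw [Function.iterate_succ_apply', hFz, hFw']

end Auto


/-- **Lemma (lexicographic description of `Σ`).** For `0 ≤ α < 1` and `β > 1`,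
a sequence `x ∈ {0,…,ℓ}^ℕ` belongs to `Σ` if and only if
`a ⪯ σ^{k-1}(x) ⪯ b` for all `k ∈ ℕ`. -/
theorem mem_Sig_iff_lex (α β : ℝ) (hα0 : 0 ≤ α) (hα1 : α < 1) (hβ : 1 < β)
    (b : ℕ → ℕ) (hb : b ∈ Sig α β) (hbsup : ∀ y ∈ Sig α β, lexLe y b)
    (x : ℕ → ℕ) (hx : ∀ n, x n ≤ ell α β) :
    x ∈ Sig α β ↔
      ∀ k : ℕ, lexLe (Om α β 0) (shift^[k] x) ∧ lexLe (shift^[k] x) b := by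
  constructor
  · intro hxSig k
    exact ⟨a_min hα0 hα1 hβ (shift_mem_Sig hxSig k),
      hbsup _ (shift_mem_Sig hxSig k)⟩
  · intro h
    have hL : ∀ k, lexLe (Om α β 0) (shift^[k] x) := fun k => (h k).1
    have hU : ∀ k, lexLe (shift^[k] x) b := fun k => (h k).2
    apply (mem_closure_iff_prefix _ _).2
    intro m
    set a := Om α β 0 with ha
    set e := run a x m with he
    set f := run b x m with hf
    have hchain1 : lexLe (shift^[e] a) (shift^[m] x) := runA_shift hL m
    have hchain2 : lexLe (shift^[m] x) (shift^[f] b) := runB_shift hU m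
    have h0F : (F α β)^[e] 0 ∈ Set.Ico (0:ℝ) 1 := iter_mem zero_mem e
    have hae : shift^[e] a = Om α β ((F α β)^[e] 0) := shift_om 0 e
    by_cases hcase : lexLt (Om α β ((F α β)^[e] 0)) (shift^[f] b)
    · obtain ⟨z, hz, hpre, -⟩ := claimC hα0 hα1 hβ hb hbsup hL hU m
        ((F α β)^[e] 0) h0F (by rw [← hae]; exact lexLe_refl _) hcase
      exact ⟨Om α β z, ⟨z, hz, rfl⟩, hpre⟩
    · -- degenerate case: the tail of `x` from position `m - f` equals `b`
      have hEq1 : lexLe (shift^[f] b) (shift^[e] a) := by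
        rw [hae]; exact not_lexLt_iff.1 hcase
      have hEq2 : shift^[e] a = shift^[f] b :=
        lexLe_antisymm (lexLe_trans hchain1 hchain2) hEq1
      have hxm : shift^[m] x = shift^[f] b :=
        lexLe_antisymm hchain2 (hEq2 ▸ hchain1)
      have hf_le : f ≤ m := run_le b x m
      set t := m - f with ht
      have hbx : shift^[t] x = b := by
        funext i
        rw [shift_iterate_apply]
        by_cases hif : i < f
        · exact run_window b x m i hif
        · push_neg at hif
          have harith : t + i = m + (i - f) := by omega
          rw [harith]
          have h3 := congrFun hxm (i - f)
          rw [shift_iterate_apply, shift_iterate_apply] at h3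
          rw [h3]
          congr 1
          omega
      set f' := run b x t with hf'
      set e' := run a x t with he'
      have hb_eq : shift^[f'] b = b := by
        apply lexLe_antisymm (hbsup _ (shift_mem_Sig hb f'))
        have h4 := runB_shift hU t
        rw [hbx] at h4
        exact h4
      have h0F' : (F α β)^[e'] 0 ∈ Set.Ico (0:ℝ) 1 := iter_mem zero_mem e'
      have hane : lexLt (Om α β ((F α β)^[e'] 0)) b :=
        om_lt_b hα0 hα1 hβ hbsup h0F'
      obtain ⟨d, hd1, hd2⟩ := hane
      set n := max (m - t) (d+1) with hn
      obtain ⟨s, hsmem, hp⟩ := (mem_closure_iff_prefix _ _).1 hb n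
      obtain ⟨p, hpmem, rfl⟩ := hsmem
      have hae' : shift^[e'] a = Om α β ((F α β)^[e'] 0) := shift_om 0 e'
      have c1 : lexLe (shift^[e'] a) (Om α β p) := by
        rw [hae']
        refine Or.inr ⟨d, fun i hi => ?_, ?_⟩
        · rw [hd1 i hi, ← hp i (by omega)]
        · rw [hp d (by omega)]; exact hd2
      have c2 : lexLt (Om α β p) (shift^[f'] b) := by
        rw [hb_eq]
        exact om_lt_b hα0 hα1 hβ hbsup hpmem
      obtain ⟨z, hz, hpre, hFz⟩ := claimC hα0 hα1 hβ hb hbsup hL hU t p hpmem c1 c2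
      refine ⟨Om α β z, ⟨z, hz, rfl⟩, ?_⟩
      intro i hi
      by_cases hit : i < t
      · exact hpre i hit
      · push_neg at hit
        have harith : i = t + (i - t) := by omega
        rw [harith, om_shift_index, hFz]
        have hj : i - t < n := by omega
        rw [hp _ hj]
        have h5 := congrFun hbx (i - t)
        rw [shift_iterate_apply] at h5
        exact h5.symm

end IntermediateBeta
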